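/- The min-sum-of-radii k-center cost function in R^d, cost(C) = sum over clusters C of radius_∞(C), satisfies the expansion property with f(k) = k: for any finite set S', any weak r-packing R of S', and any k >= 2, Opt_k(R) <= Opt_k(S') <= Opt_k(R) + r·k. -/
import Mathlib


/-- A `k`-clustering of `S`: a partition of `S` into at most `k` nonempty parts. -/
def IsClustering {d : ℕ} (S : Finset (EuclideanSpace ℝ (Fin d))) (k : ℕ)
    (𝒞 : Finset (Finset (EuclideanSpace ℝ (Fin d)))) : Prop :=
  𝒞.card ≤ k ∧ (∀ C ∈ 𝒞, C.Nonempty ∧ C ⊆ S) ∧ (∀ p ∈ S, ∃ C ∈ 𝒞, p ∈ C) ∧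
  (∀ C ∈ 𝒞, ∀ C' ∈ 𝒞, C ≠ C' → ∀ p, p ∈ C → p ∉ C')

/-- The optimal cost of a `k`-clustering of `S` under cost function `cost`. -/
noncomputable def Opt {d : ℕ} (cost : Finset (Finset (EuclideanSpace ℝ (Fin d))) → ℝ)
    (k : ℕ) (S : Finset (EuclideanSpace ℝ (Fin d))) : ℝ :=
  sInf {x | ∃ 𝒞, IsClustering S k 𝒞 ∧ cost 𝒞 = x}

/-- The `L∞`-radius of a finite point set: half the edge length of a smallest
enclosing axis-aligned cube. -/
noncomputable def radiusLinf {d : ℕ} (C : Finset (EuclideanSpace ℝ (Fin d))) : ℝ :=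
  sSup {x | ∃ p ∈ C, ∃ q ∈ C, ∃ i, x = |p i - q i|} / 2

/-- The min-sum-of-radii rectilinear `k`-center cost: the sum of the `L∞`-radii
of the clusters. -/
noncomputable def costLinfSum {d : ℕ} (𝒞 : Finset (Finset (EuclideanSpace ℝ (Fin d)))) : ℝ :=
  ∑ C ∈ 𝒞, radiusLinf C

open scoped Classical


section Aux
variable {d : ℕ}

private def RS (C : Finset (EuclideanSpace ℝ (Fin d))) : Set ℝ :=
  {x | ∃ p ∈ C, ∃ q ∈ C, ∃ i, x = |p i - q i|}

private lemma rs_finite (C : Finset (EuclideanSpace ℝ (Fin d))) : (RS C).Finite := by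
  have : RS C ⊆ ↑(((C ×ˢ C) ×ˢ (Finset.univ : Finset (Fin d))).image
      (fun t => |t.1.1 t.2 - t.1.2 t.2|)) := by
    rintro x ⟨p, hp, q, hq, i, rfl⟩
    simp only [Finset.coe_image, Set.mem_image, Finset.mem_coe, Finset.mem_product]
    exact ⟨((p, q), i), ⟨⟨hp, hq⟩, Finset.mem_univ i⟩, rfl⟩
  exact Set.Finite.subset (Finset.finite_toSet _) this

private lemma rs_bdd (C : Finset (EuclideanSpace ℝ (Fin d))) : BddAbove (RS C) :=
  (rs_finite C).bddAbove

private lemma rs_nonempty (hd : 0 < d) {C : Finset (EuclideanSpace ℝ (Fin d))}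
    (hC : C.Nonempty) : (RS C).Nonempty := by
  obtain ⟨p, hp⟩ := hC
  exact ⟨|p ⟨0, hd⟩ - p ⟨0, hd⟩|, p, hp, p, hp, ⟨0, hd⟩, rfl⟩

private lemma radiusLinf_eq (C : Finset (EuclideanSpace ℝ (Fin d))) :
    radiusLinf C = sSup (RS C) / 2 := rfl

private lemma radiusLinf_nonneg (hd : 0 < d) {C : Finset (EuclideanSpace ℝ (Fin d))}
    (hC : C.Nonempty) : 0 ≤ radiusLinf C := by
  obtain ⟨p, hp⟩ := hC
  have h0 : (0 : ℝ) ∈ RS C := ⟨p, hp, p, hp, ⟨0, hd⟩, by simp⟩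
  have := le_csSup (rs_bdd C) h0
  rw [radiusLinf_eq]; linarith

private lemma radiusLinf_nonneg' (hd : 0 < d) (C : Finset (EuclideanSpace ℝ (Fin d))) :
    0 ≤ radiusLinf C := by
  rcases C.eq_empty_or_nonempty with rfl | hC
  · rw [radiusLinf_eq]
    have : RS (∅ : Finset (EuclideanSpace ℝ (Fin d))) = ∅ := by
      ext x; simp [RS]
    rw [this, Real.sSup_empty]; norm_num
  · exact radiusLinf_nonneg hd hC

private lemma radiusLinf_mono (hd : 0 < d) {C D : Finset (EuclideanSpace ℝ (Fin d))}
    (hC : C.Nonempty) (hCD : C ⊆ D) : radiusLinf C ≤ radiusLinf D := by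
  rw [radiusLinf_eq, radiusLinf_eq]
  have : sSup (RS C) ≤ sSup (RS D) := by
    apply csSup_le_csSup (rs_bdd D) (rs_nonempty hd hC)
    rintro x ⟨p, hp, q, hq, i, rfl⟩
    exact ⟨p, hCD hp, q, hCD hq, i, rfl⟩
  linarith

private lemma abs_sub_le_two_radius {C : Finset (EuclideanSpace ℝ (Fin d))}
    {p q : EuclideanSpace ℝ (Fin d)} (hp : p ∈ C) (hq : q ∈ C) (i : Fin d) :
    |p i - q i| ≤ 2 * radiusLinf C := by
  have := le_csSup (rs_bdd C) (⟨p, hp, q, hq, i, rfl⟩ : |p i - q i| ∈ RS C)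
  rw [radiusLinf_eq]; linarith

private lemma coord_le_dist (p q : EuclideanSpace ℝ (Fin d)) (i : Fin d) :
    |p i - q i| ≤ dist p q := by
  rw [EuclideanSpace.dist_eq]
  have h1 : |p i - q i| = Real.sqrt (dist (p i) (q i) ^ 2) := by
    rw [Real.sqrt_sq (dist_nonneg)]; rw [Real.dist_eq]
  rw [h1]
  apply Real.sqrt_le_sqrt
  exact Finset.single_le_sum (f := fun j => dist (p j) (q j) ^ 2)
    (fun j _ => sq_nonneg _) (Finset.mem_univ i)

private lemma exists_clustering (S : Finset (EuclideanSpace ℝ (Fin d))) {k : ℕ}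
    (hk : 1 ≤ k) : ∃ 𝒞, IsClustering S k 𝒞 := by
  rcases S.eq_empty_or_nonempty with rfl | hS
  · exact ⟨∅, by simp [IsClustering]⟩
  · refine ⟨{S}, ?_, ?_, ?_, ?_⟩
    · simpa using hk
    · intro C hC; simp at hC; subst hC; exact ⟨hS, le_refl _⟩
    · intro p hp; exact ⟨S, Finset.mem_singleton_self S, hp⟩
    · intro C hC C' hC' hne; simp at hC hC'; subst hC; subst hC'; exact absurd rfl hne

private lemma cost_nonneg (hd : 0 < d) (𝒞 : Finset (Finset (EuclideanSpace ℝ (Fin d)))) :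
    0 ≤ costLinfSum 𝒞 :=
  Finset.sum_nonneg (fun C _ => radiusLinf_nonneg' hd C)

private lemma opt_set_nonempty (S : Finset (EuclideanSpace ℝ (Fin d))) {k : ℕ} (hk : 1 ≤ k) :
    {x | ∃ 𝒞, IsClustering S k 𝒞 ∧ costLinfSum 𝒞 = x}.Nonempty := by
  obtain ⟨𝒞, h⟩ := exists_clustering S hk
  exact ⟨costLinfSum 𝒞, 𝒞, h, rfl⟩

private lemma opt_set_bdd (hd : 0 < d) (S : Finset (EuclideanSpace ℝ (Fin d))) (k : ℕ) :
    BddBelow {x | ∃ 𝒞, IsClustering S k 𝒞 ∧ costLinfSum 𝒞 = x} := by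
  refine ⟨0, ?_⟩
  rintro x ⟨𝒞, _, rfl⟩
  exact cost_nonneg hd 𝒞

end Aux

/-- The min-sum-of-radii rectilinear `k`-center cost function
satisfies the expansion property with `f(k) = k`:
`Opt_k(R) ≤ Opt_k(S') ≤ Opt_k(R) + r·k` for any weak `r`-packing `R` of `S'`. -/
theorem minsum_radii_expansion (d : ℕ) (hd : 0 < d)
    (S' R : Finset (EuclideanSpace ℝ (Fin d))) (r : ℝ) (hr : 0 ≤ r) (hRS : R ⊆ S')
    (hpack : ∀ p ∈ S', ∃ q ∈ R, dist p q ≤ r)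
    (k : ℕ) (hk : 2 ≤ k) :
    Opt costLinfSum k R ≤ Opt costLinfSum k S' ∧
    Opt costLinfSum k S' ≤ Opt costLinfSum k R + r * k := by
  have hk1 : 1 ≤ k := le_trans (by norm_num) hk
  constructor
  · -- Opt R ≤ Opt S'
    apply le_csInf (opt_set_nonempty S' hk1)
    rintro x ⟨𝒞, ⟨hcard, hparts, hcover, hdisj⟩, rfl⟩
    -- build clustering of R from 𝒞
    set 𝒞₀ := 𝒞.filter (fun C => (C ∩ R).Nonempty) with h𝒞₀
    set 𝒞' := 𝒞₀.image (fun C => C ∩ R) with h𝒞'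
    have hinj : Set.InjOn (fun C => C ∩ R) ↑𝒞₀ := by
      intro C hC C' hC' heq
      by_contra hne
      rw [h𝒞₀] at hC hC'
      simp only [Finset.mem_coe, Finset.mem_filter] at hC hC'
      obtain ⟨p, hp⟩ := hC.2
      simp only at heq
      have hp' : p ∈ C' ∩ R := heq ▸ hp
      exact hdisj C hC.1 C' hC'.1 hne p (Finset.mem_inter.mp hp).1
        (Finset.mem_inter.mp hp').1
    have hclus : IsClustering R k 𝒞' := by
      refine ⟨?_, ?_, ?_, ?_⟩
      · exact le_trans (Finset.card_image_le) (le_trans (Finset.card_filter_le _ _) hcard)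
      · intro X hX
        obtain ⟨C, hC, rfl⟩ := Finset.mem_image.mp hX
        rw [h𝒞₀, Finset.mem_filter] at hC
        exact ⟨hC.2, Finset.inter_subset_right⟩
      · intro p hp
        obtain ⟨C, hC, hpC⟩ := hcover p (hRS hp)
        have hmem : C ∈ 𝒞₀ := Finset.mem_filter.mpr ⟨hC, ⟨p, Finset.mem_inter.mpr ⟨hpC, hp⟩⟩⟩
        exact ⟨C ∩ R, Finset.mem_image_of_mem _ hmem, Finset.mem_inter.mpr ⟨hpC, hp⟩⟩
      · intro X hX Y hY hne p hpX hpY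
        obtain ⟨C, hC, rfl⟩ := Finset.mem_image.mp hX
        obtain ⟨C', hC', rfl⟩ := Finset.mem_image.mp hY
        have hCC' : C ≠ C' := fun h => hne (by rw [h])
        rw [h𝒞₀, Finset.mem_filter] at hC hC'
        exact hdisj C hC.1 C' hC'.1 hCC' p (Finset.mem_inter.mp hpX).1
          (Finset.mem_inter.mp hpY).1
    have hcost : costLinfSum 𝒞' ≤ costLinfSum 𝒞 := by
      unfold costLinfSum
      rw [h𝒞', Finset.sum_image (fun C hC C' hC' h => hinj hC hC' h)]
      calc ∑ C ∈ 𝒞₀, radiusLinf (C ∩ R)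
          ≤ ∑ C ∈ 𝒞₀, radiusLinf C := by
            apply Finset.sum_le_sum
            intro C hC
            rw [h𝒞₀, Finset.mem_filter] at hC
            exact radiusLinf_mono hd hC.2 Finset.inter_subset_left
        _ ≤ ∑ C ∈ 𝒞, radiusLinf C := by
            apply Finset.sum_le_sum_of_subset_of_nonneg (Finset.filter_subset _ _)
            intro C _ _
            exact radiusLinf_nonneg' hd C
    exact le_trans (csInf_le (opt_set_bdd hd R k) ⟨𝒞', hclus, rfl⟩) hcost
  · -- Opt S' ≤ Opt R + r * k
    rw [← sub_le_iff_le_add]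
    apply le_csInf (opt_set_nonempty R hk1)
    rintro x ⟨𝒞, ⟨hcard, hparts, hcover, hdisj⟩, rfl⟩
    rw [sub_le_iff_le_add]
    -- choice function
    set g : EuclideanSpace ℝ (Fin d) → EuclideanSpace ℝ (Fin d) :=
      fun p => if p ∈ R then p else if h : ∃ q ∈ R, dist p q ≤ r then h.choose else p
      with hg
    have hgspec : ∀ p ∈ S', g p ∈ R ∧ dist p (g p) ≤ r := by
      intro p hp
      by_cases hpR : p ∈ R
      · simp only [hg, if_pos hpR]; exact ⟨hpR, by simp [hr]⟩
      · have hex : ∃ q ∈ R, dist p q ≤ r := hpack p hp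
        simp only [hg, if_neg hpR, dif_pos hex]
        obtain ⟨h1, h2⟩ := hex.choose_spec
        exact ⟨h1, h2⟩
    have hgR : ∀ p ∈ R, g p = p := fun p hp => by simp [hg, hp]
    set f : Finset (EuclideanSpace ℝ (Fin d)) → Finset (EuclideanSpace ℝ (Fin d)) :=
      fun C => S'.filter (fun p => g p ∈ C) with hf
    have hsub : ∀ C ∈ 𝒞, C ⊆ f C := by
      intro C hC p hp
      have hpR : p ∈ R := (hparts C hC).2 hp
      exact Finset.mem_filter.mpr ⟨hRS hpR, by rw [hgR p hpR]; exact hp⟩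
    have hfdisj : ∀ C ∈ 𝒞, ∀ C' ∈ 𝒞, C ≠ C' → ∀ p, p ∈ f C → p ∉ f C' := by
      intro C hC C' hC' hne p hp hp'
      exact hdisj C hC C' hC' hne (g p) (Finset.mem_filter.mp hp).2
        (Finset.mem_filter.mp hp').2
    have hfinj : Set.InjOn f ↑𝒞 := by
      intro C hC C' hC' heq
      by_contra hne
      obtain ⟨p, hp⟩ := (hparts C hC).1
      exact hfdisj C hC C' hC' hne p (hsub C hC hp) (heq ▸ hsub C hC hp)
    set 𝒟 := 𝒞.image f with h𝒟
    have hclus : IsClustering S' k 𝒟 := by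
      refine ⟨le_trans Finset.card_image_le hcard, ?_, ?_, ?_⟩
      · intro X hX
        obtain ⟨C, hC, rfl⟩ := Finset.mem_image.mp hX
        exact ⟨((hparts C hC).1).mono (hsub C hC), Finset.filter_subset _ _⟩
      · intro p hp
        obtain ⟨C, hC, hgC⟩ := hcover (g p) (hgspec p hp).1
        exact ⟨f C, Finset.mem_image_of_mem _ hC, Finset.mem_filter.mpr ⟨hp, hgC⟩⟩
      · intro X hX Y hY hne p hpX hpY
        obtain ⟨C, hC, rfl⟩ := Finset.mem_image.mp hX
        obtain ⟨C', hC', rfl⟩ := Finset.mem_image.mp hY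
        exact hfdisj C hC C' hC' (fun h => hne (by rw [h])) p hpX hpY
    -- radius bound for each f C
    have hrad : ∀ C ∈ 𝒞, radiusLinf (f C) ≤ radiusLinf C + r := by
      intro C hC
      have hCne := (hparts C hC).1
      have hfCne : (f C).Nonempty := hCne.mono (hsub C hC)
      rw [radiusLinf_eq]
      rw [div_le_iff₀ (by norm_num : (0:ℝ) < 2)]
      apply csSup_le (rs_nonempty hd hfCne)
      rintro x ⟨p, hp, q, hq, i, rfl⟩
      obtain ⟨hpS, hgp⟩ := Finset.mem_filter.mp hp
      obtain ⟨hqS, hgq⟩ := Finset.mem_filter.mp hq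
      have h1 : |p i - (g p) i| ≤ r := le_trans (coord_le_dist p (g p) i) (hgspec p hpS).2
      have h2 : |(g q) i - q i| ≤ r := by
        rw [abs_sub_comm]
        exact le_trans (coord_le_dist q (g q) i) (hgspec q hqS).2
      have h3 : |(g p) i - (g q) i| ≤ 2 * radiusLinf C := abs_sub_le_two_radius hgp hgq i
      have := abs_sub_le (p i) ((g p) i) (q i)
      have := abs_sub_le ((g p) i) ((g q) i) (q i)
      nlinarith [abs_nonneg (p i - q i)]
    have hcost : costLinfSum 𝒟 ≤ costLinfSum 𝒞 + r * k := by
      unfold costLinfSum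
      rw [h𝒟, Finset.sum_image (fun C hC C' hC' h => hfinj hC hC' h)]
      calc ∑ C ∈ 𝒞, radiusLinf (f C)
          ≤ ∑ C ∈ 𝒞, (radiusLinf C + r) := Finset.sum_le_sum hrad
        _ = (∑ C ∈ 𝒞, radiusLinf C) + 𝒞.card * r := by
            rw [Finset.sum_add_distrib, Finset.sum_const, nsmul_eq_mul]
        _ ≤ (∑ C ∈ 𝒞, radiusLinf C) + r * k := by
            have : (𝒞.card : ℝ) * r ≤ r * k := by
              rw [mul_comm]
              apply mul_le_mul_of_nonneg_left _ hr
              exact_mod_cast hcard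
            linarith
    calc Opt costLinfSum k S' ≤ costLinfSum 𝒟 :=
          csInf_le (opt_set_bdd hd S' k) ⟨𝒟, hclus, rfl⟩
      _ ≤ costLinfSum 𝒞 + r * k := hcost
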